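/- Let G be a connected graph with a tree decomposition in which every bag has G-diameter at most τ (i.e., treelength at most τ). Fix a root s and BFS layers L_j. Then every part of the layering tree of G with respect to s has G-diameter at most 3τ. -/
import Mathlib


/-- `ReachWithin G S u v`: there is a `u`-`v` walk in `G` all of whose vertices lie in `S`. -/
def ReachWithin {V : Type*} (G : SimpleGraph V) (S : Set V) (u v : V) : Prop :=
  ∃ p : G.Walk u v, ∀ x ∈ p.support, x ∈ S

/-- A tree decomposition of `G` over a tree `T`: bags cover all vertices and all edges,
and for every vertex `v` the bags containing `v` form a subtree (whenever `v` lies in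
the bags of `t` and `t''`, it lies in the bag of every node on the path between them). -/
structure TreeDecomp {V ι : Type*} (G : SimpleGraph V) (T : SimpleGraph ι) where
  bag : ι → Set V
  covers_vertex : ∀ v : V, ∃ t, v ∈ bag t
  covers_edge : ∀ ⦃u v : V⦄, G.Adj u v → ∃ t, u ∈ bag t ∧ v ∈ bag t
  subtree : ∀ (v : V) (t t'' : ι), v ∈ bag t → v ∈ bag t'' →
    ∀ (p : T.Walk t t''), p.IsPath → ∀ t' ∈ p.support, v ∈ bag t'

namespace PartDiamAux

open SimpleGraph

variable {V ι : Type*}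

/-- In an acyclic graph, any vertex on a path between `t` and `t'` lies on every walk
between `t` and `t'`. -/
lemma mem_support_of_isPath {T : SimpleGraph ι} (hTa : T.IsAcyclic) {t t' m : ι}
    (p : T.Walk t t') (hp : p.IsPath) (hm : m ∈ p.support) (w : T.Walk t t') :
    m ∈ w.support := by
  classical
  have h := hTa.path_unique w.toPath ⟨p, hp⟩
  have hmw : m ∈ (w.toPath : T.Walk t t').support := by rw [h]; exact hm
  exact Walk.support_toPath_subset w hmw

/-- If `v` lies in the bags of `t` and `t'` but not in the bag of `m`, then there is a
walk from `t` to `t'` in the tree avoiding `m`. -/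
lemma bags_reach {G : SimpleGraph V} {T : SimpleGraph ι} (hT : T.Connected)
    (td : TreeDecomp G T) {v : V} {t t' m : ι}
    (h1 : v ∈ td.bag t) (h2 : v ∈ td.bag t') (hm : v ∉ td.bag m) :
    ∃ w : T.Walk t t', ∀ x ∈ w.support, x ≠ m := by
  classical
  obtain ⟨w0⟩ := hT t t'
  refine ⟨(w0.toPath : T.Walk t t'), fun x hx hxm => ?_⟩
  subst hxm
  exact hm (td.subtree v t t' h1 h2 (w0.toPath : T.Walk t t') w0.toPath.2 x hx)

/-- If a `G`-walk avoids the bag of `m` entirely, then any bag of its start and any bag of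
its end are connected in the tree by a walk avoiding `m`. -/
lemma hit {G : SimpleGraph V} {T : SimpleGraph ι} (hT : T.Connected)
    (td : TreeDecomp G T) {m : ι} :
    ∀ {u v : V} (w : G.Walk u v), (∀ x ∈ w.support, x ∉ td.bag m) →
    ∀ {tu tv : ι}, u ∈ td.bag tu → v ∈ td.bag tv →
    ∃ W : T.Walk tu tv, ∀ x ∈ W.support, x ≠ m := by
  intro u v w
  induction w with
  | nil =>
    intro hS tu tv hu hv
    exact bags_reach hT td hu hv (hS _ (Walk.start_mem_support _))
  | @cons u u' v h w ih =>
    intro hS tu tv hu hv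
    obtain ⟨t, ht1, ht2⟩ := td.covers_edge h
    obtain ⟨W1, hW1⟩ := bags_reach hT td hu ht1 (hS _ (Walk.start_mem_support _))
    obtain ⟨W2, hW2⟩ := ih (fun x hx => hS x (by simp [Walk.support_cons, hx])) ht2 hv
    refine ⟨W1.append W2, fun x hx => ?_⟩
    rcases (Walk.mem_support_append_iff _ _).1 hx with h' | h'
    · exact hW1 x h'
    · exact hW2 x h'

/-- Separator property: any bag on the tree-path between a bag of `u` and a bag of `v`
meets every `u`-`v` walk in `G`. -/
lemma separator {G : SimpleGraph V} {T : SimpleGraph ι} (hT : T.Connected)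
    (hTa : T.IsAcyclic) (td : TreeDecomp G T) {u v : V} {tu tv m : ι}
    (hu : u ∈ td.bag tu) (hv : v ∈ td.bag tv) (p : T.Walk tu tv) (hp : p.IsPath)
    (hm : m ∈ p.support) (w : G.Walk u v) : ∃ x ∈ w.support, x ∈ td.bag m := by
  by_contra hc
  push_neg at hc
  obtain ⟨W, hW⟩ := hit hT td w hc hu hv
  exact hW m (mem_support_of_isPath hTa p hp hm W) rfl

/-- First vertex of a walk lying in a set `S` (given the endpoint is in `S`). -/
lemma exists_first_mem {T : SimpleGraph ι} {S : Set ι} :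
    ∀ {x y : ι} (w : T.Walk x y), y ∈ S →
    ∃ m ∈ S, ∃ (w1 : T.Walk x m) (w2 : T.Walk m y),
      w1.append w2 = w ∧ ∀ z ∈ w1.support, z ∈ S → z = m := by
  intro x y w
  induction w with
  | nil =>
    intro hy
    exact ⟨_, hy, Walk.nil, Walk.nil, rfl, fun z hz _ => by simpa using hz⟩
  | @cons a c d h w ih =>
    intro hy
    by_cases haS : a ∈ S
    · exact ⟨a, haS, Walk.nil, Walk.cons h w, rfl, fun z hz _ => by simpa using hz⟩
    · obtain ⟨m, hm, w1, w2, happ, hmin⟩ := ih hy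
      refine ⟨m, hm, Walk.cons h w1, w2, by rw [Walk.cons_append, happ], ?_⟩
      intro z hz hzS
      rw [Walk.support_cons, List.mem_cons] at hz
      rcases hz with rfl | hz
      · exact absurd hzS haS
      · exact hmin z hz hzS

/-- Median of three vertices in a tree: a vertex on all three pairwise paths. -/
lemma median {T : SimpleGraph ι} (hTa : T.IsAcyclic) {ts ta tb : ι}
    (p : T.Walk ta tb) (hp : p.IsPath) (q : T.Walk ts ta) (hq : q.IsPath)
    (r : T.Walk ts tb) (_hr : r.IsPath) :
    ∃ m : ι, m ∈ p.support ∧ m ∈ q.support ∧ m ∈ r.support := by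
  classical
  obtain ⟨m, hmS, w1, w2, happ, hmin⟩ :=
    exists_first_mem (S := {z | z ∈ p.support}) q (Walk.start_mem_support p)
  have hmp : m ∈ p.support := hmS
  have hmq : m ∈ q.support := by
    rw [← happ]
    exact Walk.subset_support_append_left _ _ (Walk.end_mem_support w1)
  have hw1path : w1.IsPath := by
    rw [← happ] at hq
    exact hq.of_append_left
  have hdpath : (p.dropUntil m hmp).IsPath := hp.dropUntil hmp
  set d := p.dropUntil m hmp with hd
  -- w1.append d is a path from ts to tb
  have hWpath : (w1.append d).IsPath := by
    rw [Walk.isPath_def, Walk.support_append]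
    refine List.Nodup.append ((Walk.isPath_def _).1 hw1path)
      (((Walk.isPath_def _).1 hdpath).tail) ?_
    intro z hz1 hz2
    have hzd : z ∈ d.support := List.mem_of_mem_tail hz2
    have hzp : z ∈ p.support := Walk.support_dropUntil_subset p hmp hzd
    have hzm : z = m := hmin z hz1 hzp
    rw [hzm] at hz2
    have hcons : d.support = m :: d.support.tail := Walk.support_eq_cons d
    have hnd : d.support.Nodup := (Walk.isPath_def _).1 hdpath
    rw [hcons] at hnd
    exact (List.nodup_cons.1 hnd).1 hz2
  have hmW : m ∈ (w1.append d).support :=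
    Walk.subset_support_append_left _ _ (Walk.end_mem_support w1)
  have hmr : m ∈ r.support := mem_support_of_isPath hTa (w1.append d) hWpath hmW r
  exact ⟨m, hmp, hmq, hmr⟩

/-- On a shortest walk, distances split additively. -/
lemma dist_split {G : SimpleGraph V} (hconn : G.Connected) {s a x : V} (Q : G.Walk s a)
    (hQ : Q.length = G.dist s a) (hx : x ∈ Q.support) :
    G.dist s x + G.dist x a = G.dist s a := by
  classical
  have h1 : G.dist s x ≤ (Q.takeUntil x hx).length := dist_le _
  have h2 : G.dist x a ≤ (Q.dropUntil x hx).length := dist_le _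
  have h3 : (Q.takeUntil x hx).length + (Q.dropUntil x hx).length = Q.length := by
    rw [← Walk.length_append, Walk.take_spec]
  have h4 : G.dist s a ≤ G.dist s x + G.dist x a := hconn.dist_triangle
  omega

end PartDiamAux

/-- If `G` admits a tree decomposition in which every bag has `G`-diameter at most `τ`
(treelength at most `τ`), then every part of the BFS layering of `G` from any root `s`
has `G`-diameter at most `3τ`. -/
theorem part_diameter_le_three_treelength {V ι : Type*} (G : SimpleGraph V)
    (hconn : G.Connected) (T : SimpleGraph ι) (hT : T.Connected) (hTa : T.IsAcyclic)
    (td : TreeDecomp G T) (τ : ℕ)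
    (hτ : ∀ t, ∀ u ∈ td.bag t, ∀ v ∈ td.bag t, G.dist u v ≤ τ)
    (s : V) (k : ℕ) (a b : V) (ha : G.dist s a = k) (hb : G.dist s b = k)
    (hab : ReachWithin G {x | k ≤ G.dist s x} a b) :
    G.dist a b ≤ 3 * τ := by
  classical
  open SimpleGraph PartDiamAux in
  obtain ⟨ts, hts⟩ := td.covers_vertex s
  obtain ⟨ta, hta⟩ := td.covers_vertex a
  obtain ⟨tb, htb⟩ := td.covers_vertex b
  obtain ⟨p0⟩ := hT ta tb
  obtain ⟨q0⟩ := hT ts ta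
  obtain ⟨r0⟩ := hT ts tb
  obtain ⟨m, hmp, hmq, hmr⟩ := PartDiamAux.median hTa
    (p0.toPath : T.Walk ta tb) p0.toPath.2
    (q0.toPath : T.Walk ts ta) q0.toPath.2
    (r0.toPath : T.Walk ts tb) r0.toPath.2
  obtain ⟨Q, hQ⟩ := (hconn s a).exists_walk_length_eq_dist
  obtain ⟨R, hR⟩ := (hconn s b).exists_walk_length_eq_dist
  obtain ⟨w, hw⟩ := hab
  obtain ⟨x, hxQ, hxm⟩ := PartDiamAux.separator hT hTa td hts hta
    (q0.toPath : T.Walk ts ta) q0.toPath.2 hmq Q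
  obtain ⟨y, hyR, hym⟩ := PartDiamAux.separator hT hTa td hts htb
    (r0.toPath : T.Walk ts tb) r0.toPath.2 hmr R
  obtain ⟨z, hzw, hzm⟩ := PartDiamAux.separator hT hTa td hta htb
    (p0.toPath : T.Walk ta tb) p0.toPath.2 hmp w
  have hx1 : G.dist s x + G.dist x a = k := by
    rw [← ha]; exact PartDiamAux.dist_split hconn Q hQ hxQ
  have hy1 : G.dist s y + G.dist y b = k := by
    rw [← hb]; exact PartDiamAux.dist_split hconn R hR hyR
  have hz1 : k ≤ G.dist s z := hw z hzw
  have hxz : G.dist x z ≤ τ := hτ m x hxm z hzm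
  have hyz : G.dist y z ≤ τ := hτ m y hym z hzm
  have hxy : G.dist x y ≤ τ := hτ m x hxm y hym
  have t1 : G.dist s z ≤ G.dist s x + G.dist x z := hconn.dist_triangle
  have t2 : G.dist s z ≤ G.dist s y + G.dist y z := hconn.dist_triangle
  have t3 : G.dist a b ≤ G.dist a x + G.dist x b := hconn.dist_triangle
  have t4 : G.dist x b ≤ G.dist x y + G.dist y b := hconn.dist_triangle
  have hax : G.dist a x = G.dist x a := G.dist_comm
  omega
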